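/- Let A be an n × m matrix with integer entries and define q_{m−1}(A) as the maximum of |det A'| over all square k' × k' submatrices A' of A with 0 ≤ k' ≤ m−1 (where the determinant of the empty 0 × 0 matrix is 1). If the homogeneous system A x ≤ 0 has a real solution x ∈ ℝ^m for which at least one of the n inequalities is strict, then it has an integer solution x ∈ ℤ^m for which at least one inequality is strict and which satisfies |x_j| ≤ q_{m−1}(A) for every j = 1, …, m. -/

import Mathlib

open Module Submodule

/-- The maximal absolute value of the determinant of a `k' × k'` submatrix of `A`
with `k' ≤ K` (the empty `0 × 0` matrix has determinant `1`). -/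
noncomputable def subdetBound {n m : ℕ} (A : Matrix (Fin n) (Fin m) ℤ) (K : ℕ) : ℕ :=
  (Finset.range (K + 1)).sup fun k =>
    Finset.univ.sup fun fg : (Fin k → Fin n) × (Fin k → Fin m) =>
      if Function.Injective fg.1 ∧ Function.Injective fg.2 then
        ((A.submatrix fg.1 fg.2).det).natAbs
      else 0


variable {n m : ℕ}

noncomputable section Aux

def rowR (A : Matrix (Fin n) (Fin m) ℤ) (i : Fin n) : EuclideanSpace ℝ (Fin m) :=
  WithLp.toLp 2 (fun j => (A i j : ℝ))

def unitR (m : ℕ) (j : Fin m) : EuclideanSpace ℝ (Fin m) :=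
  WithLp.toLp 2 (fun j' => if j' = j then 1 else 0)

def poolR (A : Matrix (Fin n) (Fin m) ℤ) : Set (EuclideanSpace ℝ (Fin m)) :=
  Set.range (rowR A) ∪ Set.range (unitR m)

def tightR (A : Matrix (Fin n) (Fin m) ℤ) (x : EuclideanSpace ℝ (Fin m)) :
    Set (EuclideanSpace ℝ (Fin m)) :=
  {v | v ∈ poolR A ∧ inner ℝ v x = (0 : ℝ)}

lemma inner_eq_sum (v x : EuclideanSpace ℝ (Fin m)) :
    (inner ℝ v x : ℝ) = ∑ j, v j * x j := by
  simp [PiLp.inner_apply, RCLike.inner_apply, mul_comm]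

lemma inner_rowR (A : Matrix (Fin n) (Fin m) ℤ) (i : Fin n) (x : EuclideanSpace ℝ (Fin m)) :
    (inner ℝ (rowR A i) x : ℝ) = ∑ j, (A i j : ℝ) * x j := by
  simp [inner_eq_sum, rowR]

lemma inner_unitR (j : Fin m) (x : EuclideanSpace ℝ (Fin m)) :
    (inner ℝ (unitR m j) x : ℝ) = x j := by
  rw [inner_eq_sum, Finset.sum_eq_single j] <;> simp [unitR] <;> tauto

lemma mem_orth_tight {A : Matrix (Fin n) (Fin m) ℤ} {x y : EuclideanSpace ℝ (Fin m)}
    (h : ∀ v ∈ tightR A x, (inner ℝ v y : ℝ) = 0) :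
    y ∈ (span ℝ (tightR A x))ᗮ := by
  rw [Submodule.mem_orthogonal]
  intro u hu
  induction hu using Submodule.span_induction with
  | mem v hv => exact h v hv
  | zero => simp
  | add u v _ _ hu hv => rw [inner_add_left, hu, hv, add_zero]
  | smul c u _ hu => rw [inner_smul_left, hu, mul_zero]

lemma self_mem_orth_tight (A : Matrix (Fin n) (Fin m) ℤ) (x : EuclideanSpace ℝ (Fin m)) :
    x ∈ (span ℝ (tightR A x))ᗮ :=
  mem_orth_tight fun _ hv => hv.2

lemma finrank_tight_le {A : Matrix (Fin n) (Fin m) ℤ} {x : EuclideanSpace ℝ (Fin m)}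
    (hx : x ≠ 0) : finrank ℝ (span ℝ (tightR A x)) ≤ m - 1 := by
  have h1 : span ℝ (tightR A x) ≤ (span ℝ {x})ᗮ := by
    rw [Submodule.span_le]
    intro v hv
    rw [SetLike.mem_coe, Submodule.mem_orthogonal]
    intro u hu
    rw [Submodule.mem_span_singleton] at hu
    obtain ⟨c, rfl⟩ := hu
    rw [inner_smul_left, real_inner_comm, hv.2, mul_zero]
  have h2 := Submodule.finrank_add_finrank_orthogonal (𝕜 := ℝ) (span ℝ {x})
  rw [finrank_span_singleton hx, finrank_euclideanSpace_fin] at h2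
  have := Submodule.finrank_mono h1
  omega

lemma climb {A : Matrix (Fin n) (Fin m) ℤ} {x : EuclideanSpace ℝ (Fin m)}
    (hfe : ∀ i, (inner ℝ (rowR A i) x : ℝ) ≤ 0)
    (hst : ∃ i, (inner ℝ (rowR A i) x : ℝ) < 0)
    (hr : finrank ℝ (span ℝ (tightR A x)) < m - 1) :
    ∃ x' : EuclideanSpace ℝ (Fin m),
      (∀ i, (inner ℝ (rowR A i) x' : ℝ) ≤ 0) ∧ (∃ i, (inner ℝ (rowR A i) x' : ℝ) < 0) ∧
      finrank ℝ (span ℝ (tightR A x)) < finrank ℝ (span ℝ (tightR A x')) := by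
  set U := span ℝ (tightR A x) with hU
  set V := Uᗮ with hV
  have hxV : x ∈ V := self_mem_orth_tight A x
  have hVx : ∀ u ∈ U, (inner ℝ u x : ℝ) = 0 := (Submodule.mem_orthogonal U x).1 hxV
  have hdim : finrank ℝ U + finrank ℝ V = m := by
    have := Submodule.finrank_add_finrank_orthogonal (𝕜 := ℝ) U
    rwa [finrank_euclideanSpace_fin] at this
  have hV2 : 2 ≤ finrank ℝ V := by omega
  -- rows that are tight lie in U
  have hrowU : ∀ i : Fin n, (inner ℝ (rowR A i) x : ℝ) = 0 → rowR A i ∈ U := fun i h =>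
    Submodule.subset_span ⟨Or.inl ⟨i, rfl⟩, h⟩
  -- it suffices to enlarge the tight set
  suffices h : ∃ x' : EuclideanSpace ℝ (Fin m),
      (∀ i, (inner ℝ (rowR A i) x' : ℝ) ≤ 0) ∧ (∃ i, (inner ℝ (rowR A i) x' : ℝ) < 0) ∧
      tightR A x ⊆ tightR A x' ∧ ∃ w, w ∈ tightR A x' ∧ w ∉ U by
    obtain ⟨x', h1, h2, h3, w, hw, hwU⟩ := h
    refine ⟨x', h1, h2, Submodule.finrank_lt_finrank_of_lt ?_⟩
    rw [SetLike.lt_iff_le_and_exists]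
    exact ⟨Submodule.span_mono h3, w, Submodule.subset_span hw, hwU⟩
  by_cases hcaseA : ∃ v ∈ V, (∃ i1, (inner ℝ (rowR A i1) x : ℝ) < 0 ∧
      (inner ℝ (rowR A i1) v : ℝ) = 0) ∧
      ∃ i2, (inner ℝ (rowR A i2) x : ℝ) < 0 ∧ (inner ℝ (rowR A i2) v : ℝ) ≠ 0
  · -- Case A
    -- normalize so that the second inner product is positive
    obtain ⟨v, hvV, ⟨i1, hi1x, hi1v⟩, i2, hi2x, hi2v⟩ := hcaseA
    have hmain : ∀ v ∈ V, (inner ℝ (rowR A i1) v : ℝ) = 0 →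
        0 < (inner ℝ (rowR A i2) v : ℝ) → ∃ x' : EuclideanSpace ℝ (Fin m),
        (∀ i, (inner ℝ (rowR A i) x' : ℝ) ≤ 0) ∧ (∃ i, (inner ℝ (rowR A i) x' : ℝ) < 0) ∧
        tightR A x ⊆ tightR A x' ∧ ∃ w, w ∈ tightR A x' ∧ w ∉ U := by
      clear hi1v hi2v hvV v
      intro v hvV hi1v hi2v
      have hVv : ∀ u ∈ U, (inner ℝ u v : ℝ) = 0 := (Submodule.mem_orthogonal U v).1 hvV
      -- tight rows don't see v
      have htight : ∀ i : Fin n, (inner ℝ (rowR A i) x : ℝ) = 0 → (inner ℝ (rowR A i) v : ℝ) = 0 :=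
        fun i h => hVv _ (hrowU i h)
      set S : Finset (Fin n) := Finset.univ.filter (fun i => 0 < (inner ℝ (rowR A i) v : ℝ))
        with hSdef
      have hi2S : i2 ∈ S := by
        rw [hSdef, Finset.mem_filter]; exact ⟨Finset.mem_univ _, hi2v⟩
      have hSne : S.Nonempty := ⟨i2, hi2S⟩
      have hSx : ∀ i ∈ S, (inner ℝ (rowR A i) x : ℝ) < 0 := by
        intro i hi
        rcases lt_or_eq_of_le (hfe i) with h | h
        · exact h
        · exfalso
          have := htight i h
          rw [hSdef, Finset.mem_filter] at hi
          linarith [hi.2]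
      set ratio : Fin n → ℝ := fun i => -(inner ℝ (rowR A i) x : ℝ) / (inner ℝ (rowR A i) v : ℝ)
        with hratio
      set t1 := S.inf' hSne ratio with ht1
      have ht1pos : 0 < t1 := by
        rw [ht1, Finset.lt_inf'_iff]
        intro i hi
        have hvpos : 0 < (inner ℝ (rowR A i) v : ℝ) := by
          rw [hSdef, Finset.mem_filter] at hi; exact hi.2
        exact div_pos (by linarith [hSx i hi]) hvpos
      refine ⟨x + t1 • v, ?_, ?_, ?_, ?_⟩
      · intro i
        rw [inner_add_right, real_inner_smul_right]
        rcases le_or_gt (inner ℝ (rowR A i) v : ℝ) 0 with h | h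
        · nlinarith [hfe i]
        · have hiS : i ∈ S := by
            rw [hSdef, Finset.mem_filter]; exact ⟨Finset.mem_univ _, h⟩
          have hle : t1 ≤ ratio i := Finset.inf'_le _ hiS
          have : t1 * (inner ℝ (rowR A i) v : ℝ) ≤ ratio i * (inner ℝ (rowR A i) v : ℝ) :=
            mul_le_mul_of_nonneg_right hle h.le
          rw [hratio] at this
          rw [div_mul_cancel₀ _ (ne_of_gt h)] at this
          linarith
      · refine ⟨i1, ?_⟩
        rw [inner_add_right, real_inner_smul_right, hi1v, mul_zero, add_zero]
        exact hi1x
      · intro w hw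
        have hwU : w ∈ U := Submodule.subset_span hw
        refine ⟨hw.1, ?_⟩
        rw [inner_add_right, real_inner_smul_right, hw.2, hVv _ hwU, mul_zero, add_zero]
      · obtain ⟨i0, hi0S, hi0⟩ := Finset.exists_mem_eq_inf' hSne ratio
        have hvpos : 0 < (inner ℝ (rowR A i0) v : ℝ) := by
          rw [hSdef, Finset.mem_filter] at hi0S; exact hi0S.2
        refine ⟨rowR A i0, ⟨Or.inl ⟨i0, rfl⟩, ?_⟩, ?_⟩
        · rw [inner_add_right, real_inner_smul_right]
          have ht : t1 = ratio i0 := hi0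
          rw [ht]
          simp only [hratio]
          rw [div_mul_cancel₀ _ (ne_of_gt hvpos)]
          ring
        · intro hU0
          have := hVx _ hU0
          linarith [hSx i0 hi0S]
    rcases hi2v.lt_or_gt with h | h
    · refine hmain (-v) (neg_mem hvV) ?_ ?_
      · rw [inner_neg_right, hi1v, neg_zero]
      · rw [inner_neg_right]; linarith
    · exact hmain v hvV hi1v h
  · -- Case B
    push_neg at hcaseA
    have hB : ∀ v ∈ V, ∀ i1, (inner ℝ (rowR A i1) x : ℝ) < 0 → (inner ℝ (rowR A i1) v : ℝ) = 0 →
        ∀ i2, (inner ℝ (rowR A i2) x : ℝ) < 0 → (inner ℝ (rowR A i2) v : ℝ) = 0 := by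
      intro v hv i1 h1 h2 i2 h3
      exact hcaseA v hv ⟨i1, h1, h2⟩ i2 h3
    obtain ⟨i0, hi0⟩ := hst
    set φ : EuclideanSpace ℝ (Fin m) → ℝ := fun v => (inner ℝ (rowR A i0) v : ℝ) with hφ
    have hφx : φ x < 0 := hi0
    have hφxne : φ x ≠ 0 := ne_of_lt hφx
    have hφlin : ∀ (a b : EuclideanSpace ℝ (Fin m)) (c : ℝ), φ (a - c • b) = φ a - c * φ b := by
      intro a b c
      simp only [hφ, inner_sub_right, real_inner_smul_right]
    have hφneg : ∀ a : EuclideanSpace ℝ (Fin m), φ (-a) = -φ a := by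
      intro a
      simp only [hφ, inner_neg_right]
    -- step 1 : every strict row is a positive multiple of φ on V
    have hstep1 : ∀ i, (inner ℝ (rowR A i) x : ℝ) < 0 → ∀ v ∈ V,
        (inner ℝ (rowR A i) v : ℝ) = ((inner ℝ (rowR A i) x : ℝ) / φ x) * φ v := by
      intro i hi v hv
      have hu : v - (φ v / φ x) • x ∈ V := Submodule.sub_mem _ hv (Submodule.smul_mem _ _ hxV)
      have hφu : φ (v - (φ v / φ x) • x) = 0 := by
        rw [hφlin, div_mul_cancel₀ _ hφxne, sub_self]
      have := hB _ hu i0 hi0 hφu i hi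
      rw [inner_sub_right, real_inner_smul_right] at this
      have h2 : (inner ℝ (rowR A i) v : ℝ) = (φ v / φ x) * (inner ℝ (rowR A i) x : ℝ) := by
        linarith
      rw [h2]; ring
    -- step 2 : find a coordinate we can make tight
    have hstep2 : ∃ j, unitR m j ∉ U ∧ ∃ w ∈ V, w j = 0 ∧ φ w ≠ 0 := by
      by_contra hcon
      push_neg at hcon
      -- pick w0 ∈ V outside the line spanned by x
      have hxne : x ≠ 0 := by
        intro h; rw [h] at hφx; simp [hφ] at hφx
      have hnle : ¬ V ≤ span ℝ {x} := by
        intro hle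
        have := Submodule.finrank_mono hle
        rw [finrank_span_singleton hxne] at this
        omega
      obtain ⟨w0, hw0V, hw0⟩ := SetLike.not_le_iff_exists.1 hnle
      set v := w0 - (φ w0 / φ x) • x with hvdef
      have hvV : v ∈ V := Submodule.sub_mem _ hw0V (Submodule.smul_mem _ _ hxV)
      have hφv : φ v = 0 := by
        rw [hvdef, hφlin, div_mul_cancel₀ _ hφxne, sub_self]
      have hvne : v ≠ 0 := by
        intro h
        apply hw0
        rw [hvdef, sub_eq_zero] at h
        exact Submodule.mem_span_singleton.2 ⟨_, h.symm⟩
      have hvj : ∀ j, v j = 0 := by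
        intro j
        by_cases hjU : unitR m j ∈ U
        · have := (Submodule.mem_orthogonal U v).1 hvV _ hjU
          rwa [inner_unitR] at this
        · -- there is v̂ ∈ V with v̂ j ≠ 0
          have hvhat : ∃ vh ∈ V, vh j ≠ 0 := by
            by_contra hc
            push_neg at hc
            apply hjU
            have : unitR m j ∈ Vᗮ := by
              rw [Submodule.mem_orthogonal]
              intro u hu
              rw [real_inner_comm, inner_unitR]
              exact hc u hu
            rwa [hV, Submodule.orthogonal_orthogonal] at this
          obtain ⟨vh, hvhV, hvhj⟩ := hvhat
          -- φ vh ≠ 0, using x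
          have hφvh : φ vh ≠ 0 := by
            intro hzero
            have hu : x - (x j / vh j) • vh ∈ V :=
              Submodule.sub_mem _ hxV (Submodule.smul_mem _ _ hvhV)
            have huj : (x - (x j / vh j) • vh) j = 0 := by
              simp only [PiLp.sub_apply, PiLp.smul_apply, smul_eq_mul]
              field_simp
              simp
            have h2 := hcon j hjU _ hu huj
            rw [hφlin, hzero, mul_zero, sub_zero] at h2
            exact hφxne h2
          -- now v j = 0
          have hu : v - (v j / vh j) • vh ∈ V :=
            Submodule.sub_mem _ hvV (Submodule.smul_mem _ _ hvhV)
          have huj : (v - (v j / vh j) • vh) j = 0 := by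
            simp only [PiLp.sub_apply, PiLp.smul_apply, smul_eq_mul]
            field_simp
            simp
          have h0 := hcon j hjU _ hu huj
          rw [hφlin, hφv, zero_sub, neg_eq_zero] at h0
          have : v j / vh j * φ vh = 0 := h0
          rcases mul_eq_zero.1 this with h | h
          · exact (div_eq_zero_iff.1 h).resolve_right hvhj
          · exact absurd h hφvh
      apply hvne
      ext j
      exact hvj j
    obtain ⟨j, hjU, w, hwV, hwj, hφw⟩ := hstep2
    have hmain : ∀ w ∈ V, w j = 0 → φ w < 0 → ∃ x' : EuclideanSpace ℝ (Fin m),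
        (∀ i, (inner ℝ (rowR A i) x' : ℝ) ≤ 0) ∧ (∃ i, (inner ℝ (rowR A i) x' : ℝ) < 0) ∧
        tightR A x ⊆ tightR A x' ∧ ∃ w', w' ∈ tightR A x' ∧ w' ∉ U := by
      clear hwV hwj hφw w
      intro w hwV hwj hφw
      have hVw : ∀ u ∈ U, (inner ℝ u w : ℝ) = 0 := (Submodule.mem_orthogonal U w).1 hwV
      refine ⟨w, ?_, ⟨i0, hφw⟩, ?_, ⟨unitR m j, ⟨Or.inr ⟨j, rfl⟩, ?_⟩, hjU⟩⟩
      · intro i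
        rcases lt_or_eq_of_le (hfe i) with h | h
        · rw [hstep1 i h w hwV]
          have hc : 0 < (inner ℝ (rowR A i) x : ℝ) / φ x := div_pos_of_neg_of_neg h hφx
          nlinarith
        · exact le_of_eq (hVw _ (hrowU i h))
      · intro v' hv'
        exact ⟨hv'.1, hVw _ (Submodule.subset_span hv')⟩
      · rw [inner_unitR]; exact hwj
    rcases hφw.lt_or_gt with h | h
    · exact hmain w hwV hwj h
    · refine hmain (-w) (neg_mem hwV) (by simp [hwj]) ?_
      rw [hφneg]; linarith

lemma strict_ne_zero {A : Matrix (Fin n) (Fin m) ℤ} {x : EuclideanSpace ℝ (Fin m)}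
    (hst : ∃ i, (inner ℝ (rowR A i) x : ℝ) < 0) : x ≠ 0 := by
  obtain ⟨i, hi⟩ := hst
  intro h
  rw [h, inner_zero_right] at hi
  exact lt_irrefl _ hi

lemma reach {A : Matrix (Fin n) (Fin m) ℤ} :
    ∀ (k : ℕ) (x : EuclideanSpace ℝ (Fin m)),
    (∀ i, (inner ℝ (rowR A i) x : ℝ) ≤ 0) → (∃ i, (inner ℝ (rowR A i) x : ℝ) < 0) →
    m - 1 ≤ finrank ℝ (span ℝ (tightR A x)) + k →
    ∃ x' : EuclideanSpace ℝ (Fin m),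
      (∀ i, (inner ℝ (rowR A i) x' : ℝ) ≤ 0) ∧ (∃ i, (inner ℝ (rowR A i) x' : ℝ) < 0) ∧
      finrank ℝ (span ℝ (tightR A x')) = m - 1 := by
  intro k
  induction k with
  | zero =>
    intro x hfe hst hk
    refine ⟨x, hfe, hst, ?_⟩
    have := finrank_tight_le (A := A) (strict_ne_zero hst)
    omega
  | succ k ih =>
    intro x hfe hst hk
    by_cases heq : finrank ℝ (span ℝ (tightR A x)) = m - 1
    · exact ⟨x, hfe, hst, heq⟩
    · have hlt : finrank ℝ (span ℝ (tightR A x)) < m - 1 := by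
        have := finrank_tight_le (A := A) (strict_ne_zero hst)
        omega
      obtain ⟨x', h1, h2, h3⟩ := climb hfe hst hlt
      exact ih x' h1 h2 (by omega)

/-- integer vector associated to an index in the pool -/
def intRow (A : Matrix (Fin n) (Fin m) ℤ) : (Fin n ⊕ Fin m) → Fin m → ℤ :=
  Sum.elim (fun i => A i) (fun j => Pi.single j 1)

lemma one_le_subdetBound (A : Matrix (Fin n) (Fin m) ℤ) (K : ℕ) : 1 ≤ subdetBound A K := by
  have h0 : (0 : ℕ) ∈ Finset.range (K + 1) := Finset.mem_range.2 (Nat.succ_pos K)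
  refine le_trans ?_ (Finset.le_sup h0)
  have := Finset.le_sup (f := fun fg : (Fin 0 → Fin n) × (Fin 0 → Fin m) =>
      if Function.Injective fg.1 ∧ Function.Injective fg.2 then
        ((A.submatrix fg.1 fg.2).det).natAbs else 0)
    (Finset.mem_univ (Fin.elim0, Fin.elim0))
  refine le_trans ?_ this
  show (1:ℕ) ≤ if Function.Injective (Fin.elim0 : Fin 0 → Fin n) ∧
      Function.Injective (Fin.elim0 : Fin 0 → Fin m) then
      ((A.submatrix Fin.elim0 Fin.elim0).det).natAbs else 0
  rw [if_pos ⟨fun a => a.elim0, fun a => a.elim0⟩]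
  simp [Matrix.det_fin_zero]

lemma detBound (A : Matrix (Fin n) (Fin m) ℤ) :
    ∀ (q : ℕ) (g : Fin q → Fin m), Function.Injective g →
    ∀ (R : Fin q → (Fin n ⊕ Fin m)),
    (Finset.univ.filter fun r => (R r).isLeft).card ≤ m - 1 →
    (Matrix.det (Matrix.of fun r c => intRow A (R r) (g c))).natAbs ≤ subdetBound A (m - 1) := by
  intro q
  induction q with
  | zero =>
    intro g hg R hcard
    rw [Matrix.det_fin_zero]
    exact one_le_subdetBound A (m - 1)
  | succ q ih =>
    intro g hg R hcard
    by_cases hall : ∀ r, (R r).isLeft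
    · have hex : ∀ r, ∃ i, R r = Sum.inl i := by
        intro r
        cases hR : R r with
        | inl i => exact ⟨i, rfl⟩
        | inr j =>
          exfalso
          have := hall r
          rw [hR] at this
          simp at this
      choose f hf using hex
      have hM : (Matrix.of fun r c => intRow A (R r) (g c)) = A.submatrix f g := by
        ext r c
        rw [Matrix.of_apply, hf r]
        rfl
      have hq : q + 1 ≤ m - 1 := by
        have : (Finset.univ.filter fun r => (R r).isLeft) = Finset.univ := by
          apply Finset.filter_true_of_mem
          intro r _
          exact hall r
        rw [this, Finset.card_univ, Fintype.card_fin] at hcard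
        exact hcard
      by_cases hfinj : Function.Injective f
      · rw [hM]
        refine le_trans ?_ (Finset.le_sup (Finset.mem_range.2 (by omega : q + 1 < m - 1 + 1)))
        have := Finset.le_sup (f := fun fg : (Fin (q+1) → Fin n) × (Fin (q+1) → Fin m) =>
            if Function.Injective fg.1 ∧ Function.Injective fg.2 then
              ((A.submatrix fg.1 fg.2).det).natAbs else 0)
          (Finset.mem_univ (f, g))
        refine le_trans ?_ this
        show _ ≤ if Function.Injective f ∧ Function.Injective g then
            ((A.submatrix f g).det).natAbs else 0
        rw [if_pos ⟨hfinj, hg⟩]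
      · rw [Function.not_injective_iff] at hfinj
        obtain ⟨r1, r2, hfr, hne⟩ := hfinj
        have : (Matrix.of fun r c => intRow A (R r) (g c)).det = 0 := by
          apply Matrix.det_zero_of_row_eq hne
          funext c
          simp only [Matrix.of_apply, hf r1, hf r2, hfr]
        rw [this]
        simp
    · push_neg at hall
      obtain ⟨r0, hr0⟩ := hall
      have hex : ∃ j0, R r0 = Sum.inr j0 := by
        cases hR : R r0 with
        | inl i => rw [hR] at hr0; simp at hr0
        | inr j => exact ⟨j, rfl⟩
      obtain ⟨j0, hj0⟩ := hex
      by_cases hjr : ∃ c0, g c0 = j0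
      · obtain ⟨c0, hc0⟩ := hjr
        have hrow : ∀ c, (Matrix.of fun r c => intRow A (R r) (g c)) r0 c
            = if c = c0 then 1 else 0 := by
          intro c
          rw [Matrix.of_apply, hj0]
          show Pi.single j0 1 (g c) = _
          rw [Pi.single_apply]
          by_cases h : c = c0
          · rw [if_pos h, if_pos (by rw [h, hc0])]
          · rw [if_neg h, if_neg (fun he => h (hg (by rw [he, hc0])))]
        rw [Matrix.det_succ_row _ r0, Finset.sum_eq_single c0]
        · rw [hrow c0, if_pos rfl, mul_one]
          rw [Int.natAbs_mul]
          have h1 : ((-1 : ℤ) ^ ((r0 : ℕ) + (c0 : ℕ))).natAbs = 1 := by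
            rw [Int.natAbs_pow]
            simp
          rw [h1, one_mul]
          have hsub : ((Matrix.of fun r c => intRow A (R r) (g c)).submatrix
              r0.succAbove c0.succAbove)
              = Matrix.of fun r c => intRow A ((R ∘ r0.succAbove) r) ((g ∘ c0.succAbove) c) := by
            ext r c
            rfl
          rw [hsub]
          apply ih (g ∘ c0.succAbove) (hg.comp (Fin.succAbove_right_injective))
          refine le_trans ?_ hcard
          apply Finset.card_le_card_of_injOn (fun r => r0.succAbove r)
          · intro r hr
            simp only [Finset.mem_filter, Finset.mem_univ, true_and] at hr ⊢
            simpa using hr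
          · intro a _ b _ hab
            exact Fin.succAbove_right_injective hab
        · intro c _ hc
          rw [hrow c, if_neg hc, mul_zero, zero_mul]
        · intro h
          exact absurd (Finset.mem_univ c0) h
      · push_neg at hjr
        have : (Matrix.of fun r c => intRow A (R r) (g c)).det = 0 := by
          apply Matrix.det_eq_zero_of_row_eq_zero r0
          intro c
          rw [Matrix.of_apply, hj0]
          show Pi.single j0 1 (g c) = 0
          rw [Pi.single_apply, if_neg (hjr c)]
        rw [this]
        simp

/-- If the homogeneous system `A x ≤ 0` with integral `A` has a nontrivial
real solution, then it has a nontrivial integer solution with coordinates bounded by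
`q_{m-1}(A)`. -/
theorem stmt_19 {n m : ℕ} (A : Matrix (Fin n) (Fin m) ℤ)
    (x : Fin m → ℝ)
    (hx : ∀ i, ∑ j, (A i j : ℝ) * x j ≤ 0)
    (hstrict : ∃ i, ∑ j, (A i j : ℝ) * x j < 0) :
    ∃ z : Fin m → ℤ,
      (∀ i, ∑ j, A i j * z j ≤ 0) ∧
      (∃ i, ∑ j, A i j * z j < 0) ∧
      (∀ j, (z j).natAbs ≤ subdetBound A (m - 1)) := by
  rcases Nat.eq_zero_or_pos m with hm | hm
  · exfalso
    obtain ⟨i, hi⟩ := hstrict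
    subst hm
    simp at hi
  obtain ⟨m', rfl⟩ : ∃ m', m = m' + 1 := ⟨m - 1, by omega⟩
  -- pass to Euclidean space
  set xE : EuclideanSpace ℝ (Fin (m' + 1)) := WithLp.toLp 2 x with hxE
  have hfe : ∀ i, (inner ℝ (rowR A i) xE : ℝ) ≤ 0 := by
    intro i; rw [inner_rowR]; exact hx i
  have hstE : ∃ i, (inner ℝ (rowR A i) xE : ℝ) < 0 := by
    obtain ⟨i, hi⟩ := hstrict
    exact ⟨i, by rw [inner_rowR]; exact hi⟩
  -- find a solution with tight set of rank m'
  obtain ⟨xs, hfes, hsts, hrank⟩ := reach m' xE hfe hstE (by omega)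
  rw [Nat.add_sub_cancel] at hrank
  set U := span ℝ (tightR A xs) with hUdef
  -- select a basis of the tight span from the tight set
  obtain ⟨s, hs_sub, hs_span, hs_li⟩ := exists_linearIndependent ℝ (tightR A xs)
  have hfin : s.Finite := hs_li.setFinite
  haveI := hfin.fintype
  have hcard : Fintype.card s = m' := by
    have h1 := finrank_span_set_eq_card hs_li
    rw [hs_span, ← hUdef, hrank] at h1
    rw [← Set.toFinset_card, ← h1]
  set e : Fin m' ≃ s := (Fintype.equivFinOfCardEq hcard).symm with hedef
  set b : Fin m' → EuclideanSpace ℝ (Fin (m' + 1)) := fun i => ((e i : _) : _) with hbdef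
  have hb_tight : ∀ i, b i ∈ tightR A xs := fun i => hs_sub (e i).2
  have hb_li : LinearIndependent ℝ b := hs_li.comp e e.injective
  have hb_range : Set.range b = s := by
    rw [hbdef]
    rw [show (fun i => ((e i : _) : EuclideanSpace ℝ (Fin (m' + 1)))) = Subtype.val ∘ e from rfl]
    rw [Set.range_comp, Equiv.range_eq_univ, Set.image_univ, Subtype.range_coe]
  have hU' : U = span ℝ (Set.range b) := by rw [hb_range, hUdef, ← hs_span]
  -- integer lift of the basis rows
  have hlift : ∀ i, ∃ r : Fin n ⊕ Fin (m' + 1), ∀ j, ((intRow A r j : ℤ) : ℝ) = b i j := by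
    intro i
    rcases (hb_tight i).1 with ⟨iA, hiA⟩ | ⟨jj, hjj⟩
    · exact ⟨Sum.inl iA, fun j => by rw [← hiA]; rfl⟩
    · refine ⟨Sum.inr jj, fun j => ?_⟩
      rw [← hjj]
      show (((Pi.single jj 1 : Fin (m' + 1) → ℤ) j : ℤ) : ℝ) = unitR (m' + 1) jj j
      rw [Pi.single_apply]
      unfold unitR
      split <;> simp_all
  choose Rb hRb using hlift
  -- the integer Cramer vector
  set z : Fin (m' + 1) → ℤ := fun j =>
    (Matrix.of fun r c => intRow A ((Fin.cons (Sum.inr j) Rb : Fin (m' + 1) → Fin n ⊕ Fin (m' + 1)) r) c).det with hzdef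
  -- the real determinant functional
  set bfun : Fin m' → (Fin (m' + 1) → ℝ) := fun i => b i with hbfun
  set M0 : Matrix (Fin (m' + 1)) (Fin (m' + 1)) ℝ := Matrix.of (Fin.cons 0 bfun) with hM0
  set L : (Fin (m' + 1) → ℝ) →ₗ[ℝ] ℝ :=
    { toFun := fun y => ((M0.updateRow 0 y).det)
      map_add' := fun y1 y2 => by
        show (M0.updateRow 0 (y1 + y2)).det = (M0.updateRow 0 y1).det + (M0.updateRow 0 y2).det
        rw [Matrix.det_updateRow_add]
      map_smul' := fun c y => by
        show (M0.updateRow 0 (c • y)).det = (RingHom.id ℝ) c • (M0.updateRow 0 y).det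
        rw [Matrix.det_updateRow_smul]
        rfl } with hLdef
  have hLM : ∀ y : Fin (m' + 1) → ℝ, (Matrix.of (Fin.cons y bfun)).det = L y := by
    intro y
    show _ = (M0.updateRow 0 y).det
    congr 1
    ext r c
    refine Fin.cases ?_ ?_ r
    · rw [Matrix.updateRow_self]; rfl
    · intro i; rw [Matrix.updateRow_ne (Fin.succ_ne_zero i)]; rfl
  -- z is the coefficient vector of L
  have hzL : ∀ j, ((z j : ℤ) : ℝ) = L (unitR (m' + 1) j) := by
    intro j
    have h2 : ((z j : ℤ) : ℝ) = (Int.castRingHom ℝ)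
        ((Matrix.of fun r c => intRow A
          ((Fin.cons (Sum.inr j) Rb : Fin (m' + 1) → Fin n ⊕ Fin (m' + 1)) r) c).det) := by
      rw [hzdef]
      rfl
    rw [h2, RingHom.map_det, ← hLM]
    congr 1
    ext r c
    simp only [RingHom.mapMatrix_apply, Matrix.map_apply, Matrix.of_apply]
    refine Fin.cases ?_ ?_ r
    · rw [Fin.cons_zero, Fin.cons_zero]
      show (((Pi.single j 1 : Fin (m' + 1) → ℤ) c : ℤ) : ℝ) = unitR (m' + 1) j c
      rw [Pi.single_apply]
      unfold unitR
      split <;> simp_all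
    · intro i
      rw [Fin.cons_succ, Fin.cons_succ]
      exact hRb i c
  -- decomposition of a vector into unit vectors
  have hyd : ∀ y : Fin (m' + 1) → ℝ, y = ∑ j, y j • (unitR (m' + 1) j : Fin (m' + 1) → ℝ) := by
    intro y
    funext c
    rw [Finset.sum_apply]
    symm
    rw [Finset.sum_eq_single c]
    · show y c • (if c = c then (1:ℝ) else 0) = y c
      simp
    · intro j _ hj
      show y j • (if c = j then (1:ℝ) else 0) = 0
      rw [if_neg fun h => hj h.symm]
      simp
    · intro h; exact absurd (Finset.mem_univ c) h
  have hlin : ∀ y : Fin (m' + 1) → ℝ, L y = ∑ j, y j * L (unitR (m' + 1) j) := by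
    intro y
    conv_lhs => rw [hyd y, map_sum]
    refine Finset.sum_congr rfl fun j _ => ?_
    rw [LinearMap.map_smul]; rfl
  set zR : EuclideanSpace ℝ (Fin (m' + 1)) := WithLp.toLp 2 (fun j => ((z j : ℤ) : ℝ)) with hzR
  have hinner_zR : ∀ y : EuclideanSpace ℝ (Fin (m' + 1)), (inner ℝ y zR : ℝ) = L y := by
    intro y
    rw [inner_eq_sum, hlin y]
    refine Finset.sum_congr rfl fun j _ => ?_
    rw [← hzL j]
  -- L vanishes on the rows b
  have hLb : ∀ i, L (b i) = 0 := by
    intro i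
    rw [← hLM]
    apply Matrix.det_zero_of_row_eq (Fin.succ_ne_zero i).symm
    show (Fin.cons (b i) bfun : Fin (m' + 1) → Fin (m' + 1) → ℝ) 0
        = (Fin.cons (b i) bfun : Fin (m' + 1) → Fin (m' + 1) → ℝ) i.succ
    rw [Fin.cons_zero, Fin.cons_succ]
  -- zR lies in the orthogonal complement of U
  have hzU : zR ∈ Uᗮ := by
    rw [Submodule.mem_orthogonal]
    intro u hu
    rw [hU'] at hu
    induction hu using Submodule.span_induction with
    | mem v hv =>
      obtain ⟨i, rfl⟩ := hv
      rw [hinner_zR]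
      exact hLb i
    | zero => simp
    | add u v _ _ hu hv => rw [inner_add_left, hu, hv, add_zero]
    | smul c u _ hu => rw [inner_smul_left, hu, mul_zero]
  -- zR is nonzero
  have hzne : zR ≠ 0 := by
    have hUne : ∃ y : EuclideanSpace ℝ (Fin (m' + 1)), y ∉ U := by
      by_contra hc
      push_neg at hc
      have : U = ⊤ := Submodule.eq_top_iff'.2 hc
      rw [this, finrank_top, finrank_euclideanSpace_fin] at hrank
      omega
    obtain ⟨y, hy⟩ := hUne
    have hli : LinearIndependent ℝ (Fin.cons y b : Fin (m' + 1) → EuclideanSpace ℝ (Fin (m' + 1))) := by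
      rw [linearIndependent_fin_cons]
      exact ⟨hb_li, fun h => hy (hU' ▸ h)⟩
    have hdet : (Matrix.of (Fin.cons y bfun)).det ≠ 0 := by
      have : LinearIndependent ℝ (Matrix.of (Fin.cons y.ofLp bfun)).row := by
        have h := hli.map' (WithLp.linearEquiv 2 ℝ (Fin (m' + 1) → ℝ)).toLinearMap
          (LinearEquiv.ker _)
        have heq : (WithLp.linearEquiv 2 ℝ (Fin (m' + 1) → ℝ)).toLinearMap ∘ Fin.cons y b
            = (Matrix.of (Fin.cons y.ofLp bfun)).row := by
          funext r; refine Fin.cases ?_ (fun i => ?_) r <;> rfl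
        rw [heq] at h; exact h
      rw [Matrix.linearIndependent_rows_iff_isUnit] at this
      exact ((Matrix.isUnit_iff_isUnit_det _).1 this).ne_zero
    rw [hLM] at hdet
    intro h0
    apply hdet
    rw [← hinner_zR, h0, inner_zero_right]
  -- the orthogonal complement is spanned by xs
  have hxs_ne : xs ≠ 0 := strict_ne_zero hsts
  have hspan : (span ℝ {xs} : Submodule ℝ (EuclideanSpace ℝ (Fin (m' + 1)))) = Uᗮ := by
    apply Submodule.eq_of_le_of_finrank_eq
    · rw [Submodule.span_le, Set.singleton_subset_iff]
      exact self_mem_orth_tight A xs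
    · rw [finrank_span_singleton hxs_ne]
      have := Submodule.finrank_add_finrank_orthogonal (𝕜 := ℝ) U
      rw [finrank_euclideanSpace_fin, hrank] at this
      omega
  have hzmem : zR ∈ span ℝ {xs} := by rw [hspan]; exact hzU
  obtain ⟨c, hc⟩ := Submodule.mem_span_singleton.1 hzmem
  have hcne : c ≠ 0 := by
    intro h; apply hzne; rw [← hc, h, zero_smul]
  -- bound on the entries of z
  have hzbound : ∀ j, (z j).natAbs ≤ subdetBound A (m' + 1 - 1) := by
    intro j
    rw [Nat.add_sub_cancel, hzdef]
    have := detBound A (m' + 1) id (fun a b h => h)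
      (Fin.cons (Sum.inr j) Rb : Fin (m' + 1) → Fin n ⊕ Fin (m' + 1)) ?_
    · exact this
    · have hsub : (Finset.univ.filter fun r => ((Fin.cons (Sum.inr j) Rb : Fin (m' + 1) → _) r).isLeft)
          ⊆ Finset.univ.erase 0 := by
        intro r hr
        rw [Finset.mem_filter] at hr
        rw [Finset.mem_erase]
        refine ⟨?_, Finset.mem_univ _⟩
        intro h0
        rw [h0] at hr
        simp at hr
      have := Finset.card_le_card hsub
      rw [Finset.card_erase_of_mem (Finset.mem_univ _), Finset.card_univ, Fintype.card_fin] at this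
      omega
  -- the inner products
  have hinner_row : ∀ i, (inner ℝ (rowR A i) zR : ℝ) = c * (inner ℝ (rowR A i) xs : ℝ) := by
    intro i
    rw [real_inner_comm, ← hc, real_inner_smul_left, real_inner_comm]
  have hcast : ∀ (w : Fin (m' + 1) → ℤ) i, ((∑ j, A i j * w j : ℤ) : ℝ)
      = ∑ j, (A i j : ℝ) * ((w j : ℤ) : ℝ) := by
    intro w i
    push_cast
    rfl
  obtain ⟨i0, hi0⟩ := hsts
  rcases lt_or_gt_of_ne hcne with hcneg | hcpos
  · -- c < 0 : use -z
    refine ⟨fun j => -(z j), ?_, ⟨i0, ?_⟩, ?_⟩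
    · intro i
      have : ((∑ j, A i j * (-(z j)) : ℤ) : ℝ) ≤ 0 := by
        rw [hcast]
        have h1 : ∑ j, (A i j : ℝ) * ((-(z j) : ℤ) : ℝ) = -(inner ℝ (rowR A i) zR : ℝ) := by
          rw [inner_rowR, ← Finset.sum_neg_distrib]
          refine Finset.sum_congr rfl fun j _ => ?_
          push_cast
          ring
        rw [h1, hinner_row]
        nlinarith [hfes i]
      exact_mod_cast this
    · have : ((∑ j, A i0 j * (-(z j)) : ℤ) : ℝ) < 0 := by
        rw [hcast]
        have h1 : ∑ j, (A i0 j : ℝ) * ((-(z j) : ℤ) : ℝ) = -(inner ℝ (rowR A i0) zR : ℝ) := by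
          rw [inner_rowR, ← Finset.sum_neg_distrib]
          refine Finset.sum_congr rfl fun j _ => ?_
          push_cast
          ring
        rw [h1, hinner_row]
        nlinarith
      exact_mod_cast this
    · intro j
      rw [Int.natAbs_neg]
      exact hzbound j
  · -- c > 0 : use z
    have h1 : ∀ i, ∑ j, (A i j : ℝ) * ((z j : ℤ) : ℝ) = (inner ℝ (rowR A i) zR : ℝ) := by
      intro i
      rw [inner_rowR]
    refine ⟨z, ?_, ⟨i0, ?_⟩, hzbound⟩
    · intro i
      have : ((∑ j, A i j * z j : ℤ) : ℝ) ≤ 0 := by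
        rw [hcast, h1, hinner_row]
        exact mul_nonpos_iff.2 (Or.inl ⟨hcpos.le, hfes i⟩)
      exact_mod_cast this
    · have : ((∑ j, A i0 j * z j : ℤ) : ℝ) < 0 := by
        rw [hcast, h1, hinner_row]
        exact mul_neg_of_pos_of_neg hcpos hi0
      exact_mod_cast this
end Aux
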